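/- Let γ ∈ (0,1), δ > 0, ε > 0, and let D be a real number with 0 < D < (1−γ)ε/(2δ). Define the sequence ρ : ℕ → ℝ by ρ(0) = ε and ρ(t+1) = (ρ(t) − 2δD)/γ. Then ρ is strictly increasing and unbounded, i.e. ρ(t) < ρ(t+1) for all t and ρ(t) → ∞ as t → ∞. -/

import Mathlib

/-- The sequence `ρ(0) = ε`, `ρ(t+1) = (ρ(t) - 2δD)/γ` of required approximation gaps of
the HSVI algorithm is strictly increasing and unbounded whenever
`0 < D < (1-γ)ε/(2δ)`. -/
theorem rho_strict_mono_unbounded (γ δ ε D : ℝ) (hγ0 : 0 < γ) (hγ1 : γ < 1)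
    (hδ : 0 < δ) (hε : 0 < ε) (hD0 : 0 < D) (hD1 : D < (1 - γ) * ε / (2 * δ))
    (ρ : ℕ → ℝ) (hρ0 : ρ 0 = ε) (hρ : ∀ t : ℕ, ρ (t + 1) = (ρ t - 2 * δ * D) / γ) :
    (∀ t : ℕ, ρ t < ρ (t + 1)) ∧ Filter.Tendsto ρ Filter.atTop Filter.atTop := by
  have h1γ : 0 < 1 - γ := by linarith
  have hγne : (γ : ℝ) ≠ 0 := ne_of_gt hγ0
  set p : ℝ := 2 * δ * D / (1 - γ) with hp
  have hpε : p < ε := by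
    rw [hp, div_lt_iff₀ h1γ]
    rw [lt_div_iff₀ (by positivity : (0:ℝ) < 2 * δ)] at hD1
    nlinarith
  have key : p - 2 * δ * D = γ * p := by
    rw [hp]; field_simp [h1γ.ne']; ring
  have hform : ∀ t : ℕ, ρ t = p + (ε - p) / γ ^ t := by
    intro t
    induction t with
    | zero => simp [hρ0]
    | succ n ih =>
      rw [hρ n, ih]
      have h1 : p + (ε - p) / γ ^ n - 2 * δ * D = γ * p + (ε - p) / γ ^ n := by
        linarith
      rw [h1, add_div, mul_div_cancel_left₀ _ hγne, pow_succ, ← div_div]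
  have hpos : ∀ t : ℕ, 0 < (ε - p) / γ ^ t := fun t =>
    div_pos (by linarith) (pow_pos hγ0 t)
  constructor
  · intro t
    rw [hform t, hform (t + 1)]
    have : (ε - p) / γ ^ t < (ε - p) / γ ^ (t + 1) := by
      apply div_lt_div_of_pos_left (by linarith) (pow_pos hγ0 _)
      exact pow_lt_pow_right_of_lt_one₀ hγ0 hγ1 (Nat.lt_succ_self t)
    linarith
  · have hform' : ρ = fun t => p + (ε - p) * (1 / γ) ^ t := by
      funext t
      rw [hform t, div_pow, one_pow, mul_one_div]
    rw [hform']
    apply Filter.tendsto_atTop_add_const_left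
    apply Filter.Tendsto.const_mul_atTop (by linarith)
    exact tendsto_pow_atTop_atTop_of_one_lt ((one_lt_div hγ0).mpr (by linarith))
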